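/- Let $m>0$, $\bar C\in\mathbb{R}$, and $a<b$ real numbers. Suppose $U:[a,b]\to\mathbb{R}$ is twice continuously differentiable, nonnegative, satisfies $U(a)=U(b)=0$, and solves $U''(x)+U(x)^m=\bar C$ for all $x\in[a,b]$. Then $\frac{1}{2}\big(b\,U'(b)^2 - a\,U'(a)^2\big) - \frac{1}{2}\int_a^b U'(x)^2\,dx - \frac{1}{m+1}\int_a^b U(x)^{m+1}\,dx = -\bar C\int_a^b U(x)\,dx$. -/

import Mathlib

/-- Multiplying the steady-state equation `U'' + U^m = C̄` by `x U'(x)` and integrating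
over `[a,b]` (for a nonnegative `C²` function vanishing at the endpoints) yields
`(1/2)(b U'(b)² - a U'(a)²) - (1/2)∫ₐᵇ U'² - (1/(m+1))∫ₐᵇ U^{m+1} = -C̄ ∫ₐᵇ U`. -/
theorem steady_state_x_multiplier_identity (m : ℝ) (hm : 0 < m) (Cbar a b : ℝ)
    (hab : a < b) (U U' U'' : ℝ → ℝ)
    (hU' : ∀ x ∈ Set.Icc a b, HasDerivWithinAt U (U' x) (Set.Icc a b) x)
    (hU'' : ∀ x ∈ Set.Icc a b, HasDerivWithinAt U' (U'' x) (Set.Icc a b) x)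
    (hcont : ContinuousOn U'' (Set.Icc a b))
    (hnn : ∀ x ∈ Set.Icc a b, 0 ≤ U x)
    (ha : U a = 0) (hb : U b = 0)
    (heq : ∀ x ∈ Set.Icc a b, U'' x + U x ^ m = Cbar) :
    (1 / 2) * (b * (U' b) ^ 2 - a * (U' a) ^ 2)
        - (1 / 2) * (∫ x in a..b, (U' x) ^ 2)
        - (1 / (m + 1)) * (∫ x in a..b, U x ^ (m + 1))
      = -Cbar * ∫ x in a..b, U x := by
  have h1 : (1:ℝ) ≤ m + 1 := by linarith
  have hm1 : m + 1 ≠ 0 := by positivity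
  set s := Set.Icc a b with hs
  have hUc : ContinuousOn U s := fun x hx => (hU' x hx).continuousWithinAt
  have hU'c : ContinuousOn U' s := fun x hx => (hU'' x hx).continuousWithinAt
  have hpow : ∀ x ∈ s, HasDerivWithinAt (fun y => U y ^ (m+1))
      ((m+1) * U x ^ m * U' x) s x := by
    intro x hx
    have h := (Real.hasDerivAt_rpow_const (x := U x) (p := m+1)
      (Or.inr h1)).comp_hasDerivWithinAt x (hU' x hx)
    simp only [add_sub_cancel_right] at h
    exact h
  set g : ℝ → ℝ := fun x => (1/2) * (x * (U' x)^2)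
      + (1/(m+1)) * (x * U x ^ (m+1)) - Cbar * (x * U x) with hgdef
  set D : ℝ → ℝ := fun x => (1/2) * (U' x)^2
      + (1/(m+1)) * U x ^ (m+1) - Cbar * U x with hDdef
  have hgderiv : ∀ x ∈ s, HasDerivWithinAt g (D x) s x := by
    intro x hx
    have hmain : HasDerivWithinAt g
        ((1/2) * (1 * (U' x)^2 + x * ((2:ℕ) * U' x ^ (2-1) * U'' x))
         + (1/(m+1)) * (1 * U x ^ (m+1) + x * ((m+1) * U x ^ m * U' x))
         - Cbar * (1 * U x + x * U' x)) s x := by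
      exact ((((hasDerivWithinAt_id x s).mul ((hU'' x hx).pow 2)).const_mul _).add
        (((hasDerivWithinAt_id x s).mul (hpow x hx)).const_mul _)).sub
        (((hasDerivWithinAt_id x s).mul (hU' x hx)).const_mul _)
    have hode := heq x hx
    convert hmain using 1
    have hU''x : U'' x = Cbar - U x ^ m := by linarith
    rw [hDdef]
    simp only [hU''x]
    field_simp
    ring
  have hgc : ContinuousOn g s := fun x hx => (hgderiv x hx).continuousWithinAt
  have huIcc : Set.uIcc a b = s := Set.uIcc_of_le hab.le
  have hUm1c : ContinuousOn (fun x => U x ^ (m+1)) s :=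
    hUc.rpow_const (fun x hx => Or.inr (by linarith))
  have hDc : ContinuousOn D s :=
    ((continuousOn_const.mul (hU'c.pow 2)).add
      (continuousOn_const.mul hUm1c)).sub (continuousOn_const.mul hUc)
  have hIntD : IntervalIntegrable D MeasureTheory.volume a b := by
    rw [intervalIntegrable_iff_integrableOn_Icc_of_le hab.le]
    exact hDc.integrableOn_compact isCompact_Icc
  have hInt1 : IntervalIntegrable (fun x => (U' x)^2) MeasureTheory.volume a b := by
    rw [intervalIntegrable_iff_integrableOn_Icc_of_le hab.le]
    exact (hU'c.pow 2).integrableOn_compact isCompact_Icc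
  have hInt2 : IntervalIntegrable (fun x => U x ^ (m+1)) MeasureTheory.volume a b := by
    rw [intervalIntegrable_iff_integrableOn_Icc_of_le hab.le]
    exact hUm1c.integrableOn_compact isCompact_Icc
  have hInt3 : IntervalIntegrable U MeasureTheory.volume a b := by
    rw [intervalIntegrable_iff_integrableOn_Icc_of_le hab.le]
    exact hUc.integrableOn_compact isCompact_Icc
  have hFTC : ∫ x in a..b, D x = g b - g a := by
    apply intervalIntegral.integral_eq_sub_of_hasDeriv_right_of_le hab.le hgc
      (fun x hx => ((hgderiv x (Set.Ioo_subset_Icc_self hx)).hasDerivAt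
        (Icc_mem_nhds hx.1 hx.2)).hasDerivWithinAt) hIntD
  have hz : (0:ℝ) ^ (m+1) = 0 := Real.zero_rpow hm1
  have hgb : g b = (1/2) * (b * (U' b)^2) := by
    simp [hgdef, hb, hz]
  have hga : g a = (1/2) * (a * (U' a)^2) := by
    simp [hgdef, ha, hz]
  have hsplit : ∫ x in a..b, D x
      = (1/2) * (∫ x in a..b, (U' x)^2) + (1/(m+1)) * (∫ x in a..b, U x ^ (m+1))
        - Cbar * ∫ x in a..b, U x := by
    rw [hDdef]
    rw [intervalIntegral.integral_sub ((hInt1.const_mul _).add (hInt2.const_mul _))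
      (hInt3.const_mul _), intervalIntegral.integral_add (hInt1.const_mul _)
      (hInt2.const_mul _), intervalIntegral.integral_const_mul,
      intervalIntegral.integral_const_mul, intervalIntegral.integral_const_mul]
  rw [hgb, hga] at hFTC
  rw [hsplit] at hFTC
  linarith
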